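/- arXiv:1406.4549 — 2 statements merged into one kernel-verified Lean document; each statement's English description precedes it below -/
import Mathlib

section
/- Let E_1,…,E_n be pairwise disjoint measurable subsets of [0,1]^d, each of Lebesgue measure 1/n, each of diameter at most ε = 2√(d+3)·n^{−1/d}, and let S = [0,a) be an anchored box. Then the number B of indices k such that E_k intersects both S and its complement satisfies B ≤ 2n(dε + O(ε²)); more precisely B ≤ n·λ_d(S_+ \ S_−) where S_± are the ε-enlarged and ε-shrunk boxes, and λ_d(S_+ \ S_−) ≤ 2dε·(1+ε)^{d−1}. -/
open Set MeasureTheory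

lemma volume_box (d : ℕ) (b : Fin d → ℝ) :
    volume {x : EuclideanSpace ℝ (Fin d) | ∀ j, x j ∈ Set.Ico 0 (b j)}
      = ∏ j, ENNReal.ofReal (b j) := by
  have h := (EuclideanSpace.volume_preserving_symm_measurableEquiv_toLp (Fin d)).measure_preimage
    (s := Set.univ.pi fun j => Set.Ico 0 (b j))
    (MeasurableSet.univ_pi fun j => measurableSet_Ico).nullMeasurableSet
  have heq : (MeasurableEquiv.toLp 2 (Fin d → ℝ)).symm ⁻¹' (Set.univ.pi fun j => Set.Ico 0 (b j))
      = {x : EuclideanSpace ℝ (Fin d) | ∀ j, x j ∈ Set.Ico 0 (b j)} := by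
    ext x; simp only [Set.mem_preimage, Set.mem_pi, Set.mem_univ, true_implies, Set.mem_setOf_eq]; rfl
  rw [heq] at h
  rw [h, volume_pi_pi]
  simp

lemma meas_box (d : ℕ) (b : Fin d → ℝ) :
    MeasurableSet {x : EuclideanSpace ℝ (Fin d) | ∀ j, x j ∈ Set.Ico 0 (b j)} := by
  have heq : {x : EuclideanSpace ℝ (Fin d) | ∀ j, x j ∈ Set.Ico 0 (b j)}
      = (MeasurableEquiv.toLp 2 (Fin d → ℝ)).symm ⁻¹' (Set.univ.pi fun j => Set.Ico 0 (b j)) := by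
    ext x; simp only [Set.mem_preimage, Set.mem_pi, Set.mem_univ, true_implies, Set.mem_setOf_eq]; rfl
  rw [heq]
  exact (MeasurableEquiv.toLp 2 (Fin d → ℝ)).symm.measurable
    (MeasurableSet.univ_pi fun j => measurableSet_Ico)

lemma hyperplane_null (d : ℕ) (j : Fin d) (c : ℝ) :
    volume {x : EuclideanSpace ℝ (Fin d) | x j = c} = 0 := by
  have hms : MeasurableSet {f : Fin d → ℝ | f j = c} :=
    (measurable_pi_apply (X := fun _ : Fin d => ℝ) j) (measurableSet_singleton c)
  have h := (EuclideanSpace.volume_preserving_symm_measurableEquiv_toLp (Fin d)).measure_preimage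
    (s := {f : Fin d → ℝ | f j = c}) hms.nullMeasurableSet
  have heq : (MeasurableEquiv.toLp 2 (Fin d → ℝ)).symm ⁻¹' {f : Fin d → ℝ | f j = c}
      = {x : EuclideanSpace ℝ (Fin d) | x j = c} := by
    ext x; simp only [Set.mem_preimage, Set.mem_pi, Set.mem_univ, true_implies, Set.mem_setOf_eq]; rfl
  rw [heq] at h
  rw [h]
  simpa [volume_pi] using Measure.pi_hyperplane (fun _ : Fin d => (volume : Measure ℝ)) j c

lemma coord_dist (d : ℕ) (x y : EuclideanSpace ℝ (Fin d)) (j : Fin d) :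
    |x j - y j| ≤ dist x y := by
  rw [EuclideanSpace.dist_eq]
  have h1 : |x j - y j| = Real.sqrt (dist (x j) (y j) ^ 2) := by
    rw [Real.sqrt_sq_eq_abs, Real.dist_eq, abs_abs]
  rw [h1]
  apply Real.sqrt_le_sqrt
  exact Finset.single_le_sum (f := fun i => dist (x i) (y i) ^ 2)
    (fun i _ => sq_nonneg _) (Finset.mem_univ j)

lemma prod_sub_le {ι : Type*} (s : Finset ι) (b c : ι → ℝ)
    (hc : ∀ i, 0 ≤ c i) (hcb : ∀ i, c i ≤ b i) (hb1 : ∀ i, b i ≤ 1) :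
    ∏ i ∈ s, b i - ∏ i ∈ s, c i ≤ ∑ i ∈ s, (b i - c i) := by
  induction s using Finset.cons_induction with
  | empty => simp
  | cons a s ha ih =>
    rw [Finset.prod_cons, Finset.prod_cons, Finset.sum_cons]
    have hPQ : ∏ i ∈ s, c i ≤ ∏ i ∈ s, b i :=
      Finset.prod_le_prod (fun i _ => hc i) (fun i _ => hcb i)
    have hP1 : ∏ i ∈ s, b i ≤ 1 :=
      Finset.prod_le_one (fun i _ => le_trans (hc i) (hcb i)) (fun i _ => hb1 i)
    have hP0 : 0 ≤ ∏ i ∈ s, b i := Finset.prod_nonneg (fun i _ => le_trans (hc i) (hcb i))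
    have hca1 : c a ≤ 1 := le_trans (hcb a) (hb1 a)
    nlinarith [hc a, hcb a]

open scoped Classical in
/-- The number of cells of measure `1/n` and diameter at most
`ε = 2√(d+3)·n^{-1/d}` straddling the boundary of an anchored box is at most
`n` times the volume of the boundary shell, which is at most `2dε(1+ε)^{d-1}`. -/
theorem card_boundary_cells_le (d n : ℕ) (hd : 1 ≤ d) (hn : 0 < n)
    (E : Fin n → Set (EuclideanSpace ℝ (Fin d)))
    (hmeas : ∀ k, MeasurableSet (E k))
    (hsub : ∀ k, E k ⊆ {x | ∀ j, x j ∈ Set.Icc (0 : ℝ) 1})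
    (hdisj : Pairwise (Function.onFun Disjoint E))
    (hvol : ∀ k, volume (E k) = 1 / n)
    (a : Fin d → ℝ) (ha : ∀ j, a j ∈ Set.Icc (0 : ℝ) 1)
    (ε : ℝ) (hε : ε = 2 * Real.sqrt (d + 3) * (n : ℝ) ^ (-(1 : ℝ) / d))
    (hdiam : ∀ k, Metric.diam (E k) ≤ ε) :
    ((Finset.univ.filter (fun k =>
        (E k ∩ {x | ∀ j, x j ∈ Set.Ico 0 (a j)}).Nonempty ∧
        (E k ∩ ({x | ∀ j, x j ∈ Set.Icc (0 : ℝ) 1}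
          \ {x | ∀ j, x j ∈ Set.Ico 0 (a j)})).Nonempty)).card : ℝ)
      ≤ n * (volume ({x : EuclideanSpace ℝ (Fin d) | ∀ j, x j ∈ Set.Ico 0 (min (a j + ε) 1)}
          \ {x | ∀ j, x j ∈ Set.Ico 0 (max (a j - ε) 0)})).toReal ∧
    (volume ({x : EuclideanSpace ℝ (Fin d) | ∀ j, x j ∈ Set.Ico 0 (min (a j + ε) 1)}
        \ {x | ∀ j, x j ∈ Set.Ico 0 (max (a j - ε) 0)})).toReal
      ≤ 2 * d * ε * (1 + ε) ^ (d - 1) := by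
  have hε0 : 0 ≤ ε := by rw [hε]; positivity
  set Sp := {x : EuclideanSpace ℝ (Fin d) | ∀ j, x j ∈ Set.Ico 0 (min (a j + ε) 1)} with hSpdef
  set Sm := {x : EuclideanSpace ℝ (Fin d) | ∀ j, x j ∈ Set.Ico 0 (max (a j - ε) 0)} with hSmdef
  have hSpMeas : MeasurableSet Sp := meas_box d _
  have hSmMeas : MeasurableSet Sm := meas_box d _
  have hvolSp : volume Sp = ∏ j, ENNReal.ofReal (min (a j + ε) 1) := volume_box d _
  have hvolSm : volume Sm = ∏ j, ENNReal.ofReal (max (a j - ε) 0) := volume_box d _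
  have hSpFin : volume Sp ≠ ⊤ := by
    rw [hvolSp]
    exact (ENNReal.prod_lt_top fun j _ => ENNReal.ofReal_lt_top).ne
  have hDFin : volume (Sp \ Sm) ≠ ⊤ :=
    ((measure_mono Set.diff_subset).trans_lt (lt_top_iff_ne_top.2 hSpFin)).ne
  set B := Finset.univ.filter (fun k =>
        (E k ∩ {x | ∀ j, x j ∈ Set.Ico 0 (a j)}).Nonempty ∧
        (E k ∩ ({x | ∀ j, x j ∈ Set.Icc (0 : ℝ) 1}
          \ {x | ∀ j, x j ∈ Set.Ico 0 (a j)})).Nonempty) with hBdef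
  have key : ∀ k ∈ B, volume (E k ∩ (Sp \ Sm)) = 1 / n := by
    intro k hk
    rw [hBdef, Finset.mem_filter] at hk
    obtain ⟨-, ⟨x, hxE, hxS⟩, ⟨y, hyE, hyCube, hyS⟩⟩ := hk
    have hbd : Bornology.IsBounded (E k) := by
      apply Bornology.IsBounded.subset _ (hsub k)
      rw [Metric.isBounded_iff]
      refine ⟨Real.sqrt d, fun p hp q hq => ?_⟩
      rw [EuclideanSpace.dist_eq]
      apply Real.sqrt_le_sqrt
      calc ∑ i, dist (p i) (q i) ^ 2 ≤ ∑ _i : Fin d, (1 : ℝ) := by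
            apply Finset.sum_le_sum
            intro i _
            have hpi := hp i; have hqi := hq i
            rw [Real.dist_eq, sq_abs]
            nlinarith [hpi.1, hpi.2, hqi.1, hqi.2]
        _ = d := by simp
    have hdist : ∀ z ∈ E k, ∀ w ∈ E k, ∀ j, |z j - w j| ≤ ε := fun z hz w hw j =>
      (coord_dist d z w j).trans ((Metric.dist_le_diam_of_mem hbd hz hw).trans (hdiam k))
    -- E k does not meet Sm
    have hSmEmpty : ∀ z ∈ E k, z ∉ Sm := by
      intro z hzE hzSm
      simp only [Set.mem_setOf_eq] at hyS
      push_neg at hyS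
      obtain ⟨j, hj⟩ := hyS
      have hy0 : (0 : ℝ) ≤ y j := ((hsub k hyE) j).1
      have hyj : a j ≤ y j := by
        by_contra h; push_neg at h
        exact hj ⟨hy0, h⟩
      have h1 := hdist z hzE y hyE j
      have h2 := hzSm j
      have h3 : (0 : ℝ) ≤ z j := ((hsub k hzE) j).1
      have habs := abs_le.mp h1
      have : max (a j - ε) 0 ≤ z j := max_le (by linarith [habs.1, habs.2]) h3
      exact absurd h2.2 (not_lt.mpr this)
    -- E k \ Sp is null
    have hSpNull : volume (E k \ Sp) = 0 := by
      have hsub2 : E k \ Sp ⊆ ⋃ j, {x : EuclideanSpace ℝ (Fin d) | x j = 1} := by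
        rintro z ⟨hzE, hzSp⟩
        simp only [hSpdef, Set.mem_setOf_eq] at hzSp
        push_neg at hzSp
        obtain ⟨j, hj⟩ := hzSp
        have h3 := (hsub k hzE) j
        have hzj : min (a j + ε) 1 ≤ z j := by
          by_contra h; push_neg at h
          exact hj ⟨h3.1, h⟩
        have hxj := hxS j
        have hdzx := abs_le.mp (hdist z hzE x hxE j)
        have hlt : z j < a j + ε := by linarith [hxj.2, hdzx.2]
        have h1le : (1 : ℝ) ≤ z j := by
          rcases le_or_gt (a j + ε) 1 with hle | hgt
          · rw [min_eq_left hle] at hzj; linarith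
          · rw [min_eq_right hgt.le] at hzj; exact hzj
        exact Set.mem_iUnion.2 ⟨j, le_antisymm h3.2 h1le⟩
      exact measure_mono_null hsub2 (measure_iUnion_null fun j => hyperplane_null d j 1)
    have hset : E k ∩ (Sp \ Sm) = E k ∩ Sp := by
      ext z
      constructor
      · rintro ⟨h1, h2, _⟩; exact ⟨h1, h2⟩
      · rintro ⟨h1, h2⟩; exact ⟨h1, h2, fun hm => hSmEmpty z h1 hm⟩
    rw [hset]
    have hset2 : E k ∩ Sp = E k \ (E k \ Sp) := by
      rw [Set.diff_diff_right_self]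
    rw [hset2, measure_diff_null hSpNull, hvol k]
  -- sum of volumes
  have hdisjB : (B : Set (Fin n)).PairwiseDisjoint (fun k => E k ∩ (Sp \ Sm)) :=
    fun i _ j _ hij => (hdisj hij).mono Set.inter_subset_left Set.inter_subset_left
  have hsum : ∑ k ∈ B, volume (E k ∩ (Sp \ Sm)) = volume (⋃ k ∈ B, E k ∩ (Sp \ Sm)) :=
    (measure_biUnion_finset hdisjB fun k _ => (hmeas k).inter (hSpMeas.diff hSmMeas)).symm
  have hle : (B.card : ENNReal) * (1 / n) ≤ volume (Sp \ Sm) := by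
    calc (B.card : ENNReal) * (1 / n) = ∑ _k ∈ B, ((1 : ENNReal) / n) := by
          rw [Finset.sum_const, nsmul_eq_mul]
      _ = ∑ k ∈ B, volume (E k ∩ (Sp \ Sm)) := (Finset.sum_congr rfl key).symm
      _ = volume (⋃ k ∈ B, E k ∩ (Sp \ Sm)) := hsum
      _ ≤ volume (Sp \ Sm) :=
          measure_mono (Set.iUnion₂_subset fun k _ => Set.inter_subset_right)
  constructor
  · -- first part
    have h2 := ENNReal.toReal_mono hDFin hle
    rw [ENNReal.toReal_mul, ENNReal.toReal_div] at h2
    simp only [ENNReal.toReal_natCast, ENNReal.toReal_one] at h2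
    have hn' : (0 : ℝ) < n := by exact_mod_cast hn
    calc (B.card : ℝ) = n * ((B.card : ℝ) * (1 / n)) := by field_simp
      _ ≤ n * (volume (Sp \ Sm)).toReal := by
          apply mul_le_mul_of_nonneg_left _ hn'.le
          exact h2
  · -- second part
    have hsubSm : Sm ⊆ Sp := by
      intro z hz j
      have h := hz j
      refine ⟨h.1, lt_of_lt_of_le h.2 ?_⟩
      apply max_le
      · exact le_min (by linarith) (by linarith [(ha j).2])
      · exact le_min (by linarith [(ha j).1]) zero_le_one
    have hvolD : volume (Sp \ Sm) = volume Sp - volume Sm :=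
      measure_diff hsubSm hSmMeas.nullMeasurableSet
        (((measure_mono hsubSm).trans_lt (lt_top_iff_ne_top.2 hSpFin)).ne)
    have hmono : volume Sm ≤ volume Sp := measure_mono hsubSm
    rw [hvolD, ENNReal.toReal_sub_of_le hmono hSpFin, hvolSp, hvolSm,
      ENNReal.toReal_prod, ENNReal.toReal_prod]
    have hb : ∀ j, (ENNReal.ofReal (min (a j + ε) 1)).toReal = min (a j + ε) 1 := fun j =>
      ENNReal.toReal_ofReal (le_min (by linarith [(ha j).1]) zero_le_one)
    have hc : ∀ j, (ENNReal.ofReal (max (a j - ε) 0)).toReal = max (a j - ε) 0 := fun j =>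
      ENNReal.toReal_ofReal (le_max_right _ _)
    rw [Finset.prod_congr rfl fun j _ => hb j, Finset.prod_congr rfl fun j _ => hc j]
    have hstep : ∏ j, min (a j + ε) 1 - ∏ j, max (a j - ε) 0
        ≤ ∑ j : Fin d, (min (a j + ε) 1 - max (a j - ε) 0) := by
      apply prod_sub_le
      · exact fun j => le_max_right _ _
      · intro j
        apply max_le
        · exact le_min (by linarith) (by linarith [(ha j).2])
        · exact le_min (by linarith [(ha j).1]) zero_le_one
      · exact fun j => min_le_right _ _
    have hstep2 : ∑ j : Fin d, (min (a j + ε) 1 - max (a j - ε) 0) ≤ d * (2 * ε) := by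
      calc ∑ j : Fin d, (min (a j + ε) 1 - max (a j - ε) 0) ≤ ∑ _j : Fin d, 2 * ε := by
            apply Finset.sum_le_sum
            intro j _
            have h1 : min (a j + ε) 1 ≤ a j + ε := min_le_left _ _
            have h2 : a j - ε ≤ max (a j - ε) 0 := le_max_left _ _
            linarith
        _ = d * (2 * ε) := by simp [Finset.sum_const, mul_comm]
    have hpow : (1 : ℝ) ≤ (1 + ε) ^ (d - 1) := one_le_pow₀ (by linarith)
    have hd' : (1 : ℝ) ≤ d := by exact_mod_cast hd
    have h2d : (0 : ℝ) ≤ 2 * d * ε := by positivity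
    nlinarith [hstep, hstep2, mul_nonneg h2d (by linarith : (0:ℝ) ≤ (1 + ε) ^ (d - 1) - 1)]
end

section
/- Under the hypotheses of the discontinuous-integrand stratified estimator (E_i disjoint, measure 1/n, diameter ≤ 2√(d+3)n^{−1/d}, f = g·1_Ω with g Lipschitz and bounded by D, ∂Ω of finite Minkowski content), let T_bdy be the set of boundary indices and set n₀ = ⌈n/|T_bdy|⌉. Define the adaptive estimator μ̂ = (1/(n·n₀))Σ_{j=1}^{n₀}Σ_{i∈T_bdy} f(x_i^{(j)}) + (1/n)Σ_{i∉T_bdy} f(x_i), with all x_i^{(j)}, x_i independent and x_i^{(j)}, x_i uniform on E_i. Then μ̂ is unbiased and Var[μ̂] = O(n^{−1−2/d}). -/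
open MeasureTheory ProbabilityTheory Filter
open scoped ENNReal

lemma aux_exists_frontier_mem_segment {V : Type*} [NormedAddCommGroup V] [NormedSpace ℝ V]
    {S : Set V} {a b : V} (ha : a ∈ S) (hb : b ∉ S) :
    ∃ p ∈ segment ℝ a b, p ∈ frontier S := by
  by_contra h
  push_neg at h
  have hseg : segment ℝ a b ⊆ interior S ∪ interior Sᶜ := by
    intro p hp
    have hpf := h p hp
    by_cases hc : p ∈ closure S
    · left
      have : p ∈ closure S \ frontier S := ⟨hc, hpf⟩
      rw [frontier] at hpf
      simp only [Set.mem_diff, not_and, not_not] at hpf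
      exact hpf hc
    · right
      rw [interior_compl]
      exact hc
  have hconn : IsPreconnected (segment ℝ a b) := (convex_segment a b).isPreconnected
  have haI : a ∈ interior S := by
    have := hseg (left_mem_segment ℝ a b)
    rcases this with h1 | h2
    · exact h1
    · exact absurd (by
        have : a ∈ closure S := subset_closure ha
        rw [interior_compl] at h2
        exact h2 this) (by simp)
  have hbI : b ∈ interior Sᶜ := by
    have := hseg (right_mem_segment ℝ a b)
    rcases this with h1 | h2
    · exact absurd (interior_subset h1) hb
    · exact h2
  obtain ⟨z, hz⟩ := hconn _ _ isOpen_interior isOpen_interior hseg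
    ⟨a, left_mem_segment ℝ a b, haI⟩ ⟨b, right_mem_segment ℝ a b, hbI⟩
  exact hb (by
    have h1 : z ∈ interior S := hz.2.1
    have h2 : z ∈ interior Sᶜ := hz.2.2
    exact absurd (interior_subset h1) (by simpa using interior_subset h2)) |>.elim

lemma aux_subset_cthickening {V : Type*} [NormedAddCommGroup V] [NormedSpace ℝ V]
    {S E : Set V} (hEb : Bornology.IsBounded E) {δ : ℝ} (hδ : Metric.diam E ≤ δ)
    (h1 : (E ∩ S).Nonempty) (h2 : ¬ E ⊆ S) :
    E ⊆ Metric.cthickening (2 * δ) (frontier S) := by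
  obtain ⟨a, haE, haS⟩ := h1
  obtain ⟨b, hbE, hbS⟩ := Set.not_subset.1 h2
  obtain ⟨p, hpseg, hpf⟩ := aux_exists_frontier_mem_segment haS hbS
  intro e heE
  have hap : dist a p ≤ dist a b := by
    have := dist_add_dist_of_mem_segment hpseg
    have hnn : (0:ℝ) ≤ dist p b := dist_nonneg
    linarith
  have h3 : dist e p ≤ 2 * δ := by
    have h4 : dist e a ≤ δ := le_trans (Metric.dist_le_diam_of_mem hEb heE haE) hδ
    have h5 : dist a b ≤ δ := le_trans (Metric.dist_le_diam_of_mem hEb haE hbE) hδ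
    calc dist e p ≤ dist e a + dist a p := dist_triangle e a p
    _ ≤ δ + δ := by linarith
    _ = 2 * δ := by ring
  exact Metric.mem_cthickening_of_dist_le e p _ _ hpf h3

lemma aux_integral_comp {Ω' : Type*} [MeasureSpace Ω']
    {V : Type*} [MeasurableSpace V] {X : Ω' → V} {ν : Measure V} [IsProbabilityMeasure ν]
    (hmap : Measure.map X ℙ = ν) {φ : V → ℝ} (hφ : Measurable φ) :
    ∫ ω, φ (X ω) ∂ℙ = ∫ v, φ v ∂ν := by
  have hX : AEMeasurable X ℙ := by
    by_contra h
    rw [Measure.map_of_not_aemeasurable h] at hmap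
    have : (ν : Measure V) Set.univ = 1 := measure_univ
    rw [← hmap] at this
    simp at this
  rw [← hmap, integral_map hX hφ.aestronglyMeasurable]

lemma aux_ae_mem {Ω' : Type*} [MeasureSpace Ω']
    {V : Type*} [MeasurableSpace V] {X : Ω' → V} {ν : Measure V} [IsProbabilityMeasure ν]
    (hmap : Measure.map X ℙ = ν) {A : Set V} (hA : MeasurableSet A) (hνA : ν Aᶜ = 0) :
    ∀ᵐ ω ∂(ℙ : Measure Ω'), X ω ∈ A := by
  have hX : AEMeasurable X ℙ := by
    by_contra h
    rw [Measure.map_of_not_aemeasurable h] at hmap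
    have : (ν : Measure V) Set.univ = 1 := measure_univ
    rw [← hmap] at this
    simp at this
  have := Measure.map_apply_of_aemeasurable hX hA.compl
  rw [hmap, hνA] at this
  rw [ae_iff]
  have hset : {ω | ¬ X ω ∈ A} = X ⁻¹' Aᶜ := by ext ω; simp
  rw [hset]
  exact this.symm

lemma aux_variance_le {Ω' : Type*} [MeasureSpace Ω'] [IsProbabilityMeasure (ℙ : Measure Ω')]
    {X : Ω' → ℝ} (hX : AEStronglyMeasurable X ℙ) (c B : ℝ)
    (h : ∀ᵐ ω ∂(ℙ : Measure Ω'), |X ω - c| ≤ B) : variance X ℙ ≤ B ^ 2 := by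
  have hB : MemLp X 2 (ℙ : Measure Ω') := by
    apply MemLp.of_bound hX (B + |c|)
    filter_upwards [h] with ω hω
    have := abs_sub_abs_le_abs_sub (X ω) c
    rw [Real.norm_eq_abs]
    linarith [abs_nonneg (X ω - c)]
  have hint : Integrable X ℙ := hB.integrable one_le_two
  have hsq : Integrable (fun ω => X ω ^ 2) ℙ := by
    simpa [Function.comp] using hB.integrable_sq
  set m := ∫ ω, X ω ∂ℙ with hm
  have hv : variance X ℙ = (∫ ω, X ω ^ 2 ∂ℙ) - m ^ 2 := variance_eq_sub hB
  have hexp : ∫ ω, (X ω - c) ^ 2 ∂ℙ = (∫ ω, X ω ^ 2 ∂ℙ) - 2 * c * m + c ^ 2 := by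
    have : ∀ ω, (X ω - c) ^ 2 = X ω ^ 2 - 2 * c * X ω + c ^ 2 := by intro ω; ring
    simp_rw [this]
    rw [integral_add (by exact (hsq.sub ((hint.const_mul (2*c)).congr (by
        filter_upwards with ω; ring))) ) (integrable_const _), integral_sub hsq
        ((hint.const_mul (2*c)).congr (by filter_upwards with ω; ring))]
    have h2c : ∫ ω, 2 * c * X ω ∂(ℙ : Measure Ω') = 2 * c * m := by
      rw [hm]; exact integral_const_mul (μ := (ℙ : Measure Ω')) (2*c) X
    rw [integral_const, h2c]
    simp
  have hle : ∫ ω, (X ω - c) ^ 2 ∂ℙ ≤ B ^ 2 := by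
    have : ∫ ω, (X ω - c) ^ 2 ∂ℙ ≤ ∫ _ω : Ω', B ^ 2 ∂ℙ := by
      apply integral_mono_ae _ (integrable_const _)
      · filter_upwards [h] with ω hω
        have := sq_abs (X ω - c)
        nlinarith [abs_nonneg (X ω - c)]
      · have hYm : MemLp (fun ω => X ω - c) 2 (ℙ : Measure Ω') := hB.sub (memLp_const c)
        simpa using hYm.integrable_sq
    simpa using this
  nlinarith [sq_nonneg (m - c), hv, hexp, hle]

lemma aux_cube_bounded (d : ℕ) :
    Bornology.IsBounded {y : EuclideanSpace ℝ (Fin d) | ∀ j, y j ∈ Set.Icc (0 : ℝ) 1} := by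
  apply Metric.isBounded_closedBall (x := (0 : EuclideanSpace ℝ (Fin d)))
    (r := Real.sqrt d) |>.subset
  intro y hy
  simp only [Metric.mem_closedBall, dist_zero_right]
  rw [EuclideanSpace.norm_eq]
  apply Real.sqrt_le_sqrt
  calc ∑ j, ‖y j‖ ^ 2 ≤ ∑ _j : Fin d, 1 := by
        apply Finset.sum_le_sum
        intro j _
        have := hy j
        have h1 : |y j| ≤ 1 := abs_le.2 ⟨by linarith [this.1], this.2⟩
        calc ‖y j‖ ^ 2 = |y j| ^ 2 := by rw [Real.norm_eq_abs]
        _ ≤ 1 ^ 2 := by apply pow_le_pow_left₀ (abs_nonneg _) h1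
        _ = 1 := one_pow _
  _ = d := by simp

lemma aux_card_bound (d : ℕ) (hd : 1 ≤ d)
    (S : Set (EuclideanSpace ℝ (Fin d)))
    (hS : S ⊆ {y : EuclideanSpace ℝ (Fin d) | ∀ j, y j ∈ Set.Icc (0 : ℝ) 1})
    (MC : ℝ)
    (hMC : Tendsto (fun ε : ℝ =>
        (volume (Metric.cthickening ε (frontier S))).toReal / (2 * ε))
      (nhdsWithin 0 (Set.Ioi 0)) (nhds MC)) :
    ∃ A : ℝ, 0 ≤ A ∧ ∀ n : ℕ, 0 < n →
      ∀ E : Fin n → Set (EuclideanSpace ℝ (Fin d)),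
        (∀ i, MeasurableSet (E i)) →
        (∀ i, E i ⊆ {y : EuclideanSpace ℝ (Fin d) | ∀ j, y j ∈ Set.Icc (0 : ℝ) 1}) →
        Pairwise (Function.onFun Disjoint E) →
        (∀ i, volume (E i) = 1 / n) →
        (∀ i, Metric.diam (E i) ≤ 2 * Real.sqrt (d + 3) * (n : ℝ) ^ (-(1 : ℝ) / d)) →
        ∀ T : Finset (Fin n),
          (∀ i ∈ T, (E i ∩ S).Nonempty ∧ ¬ E i ⊆ S) →
          (T.card : ℝ) ≤ A * (n : ℝ) ^ (1 - 1 / (d : ℝ)) := by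
  -- the frontier thickening has eventually small volume
  have hev : ∀ᶠ ε in nhdsWithin (0:ℝ) (Set.Ioi 0),
      (volume (Metric.cthickening ε (frontier S))).toReal / (2 * ε) < MC + 1 :=
    hMC.eventually (Filter.Tendsto.eventually_lt_const (lt_add_one MC) tendsto_id)
  rw [eventually_nhdsWithin_iff, Metric.eventually_nhds_iff] at hev
  obtain ⟨ε₀, hε₀pos, hε₀⟩ := hev
  have key : ∀ ε : ℝ, 0 < ε → ε < ε₀ →
      (volume (Metric.cthickening ε (frontier S))).toReal ≤ (MC + 1) * (2 * ε) := by
    intro ε hε1 hε2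
    have := hε₀ (by rw [Real.dist_eq, sub_zero, abs_of_pos hε1]; exact hε2) hε1
    have h2ε : (0:ℝ) < 2 * ε := by linarith
    calc (volume (Metric.cthickening ε (frontier S))).toReal
        = ((volume (Metric.cthickening ε (frontier S))).toReal / (2*ε)) * (2*ε) := by
          field_simp
      _ ≤ (MC + 1) * (2 * ε) := by
          apply mul_le_mul_of_nonneg_right (le_of_lt this) (le_of_lt h2ε)
  have hMC0 : 0 ≤ MC := by
    apply ge_of_tendsto hMC
    filter_upwards [self_mem_nhdsWithin] with ε (hε : ε ∈ Set.Ioi (0:ℝ))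
    have hε' : (0:ℝ) < ε := hε
    exact div_nonneg ENNReal.toReal_nonneg (by linarith)
  have hsq : (0:ℝ) < Real.sqrt (d + 3) := Real.sqrt_pos.2 (by positivity)
  set c : ℝ := 4 * Real.sqrt (d + 3) / ε₀ with hc
  have hcpos : 0 < c := by positivity
  set N₀ : ℝ := c ^ d with hN₀
  have hN₀pos : 0 < N₀ := pow_pos hcpos d
  refine ⟨max ((MC + 1) * (8 * Real.sqrt (d+3))) N₀, le_max_of_le_left (mul_nonneg (by linarith) (by positivity)), ?_⟩
  intro n hn E hEmeas hEsub hEdisj hEvol hEdiam T hT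
  have hn1 : (1:ℝ) ≤ n := by exact_mod_cast hn
  have hnpos : (0:ℝ) < n := by linarith
  have hd1 : (1:ℝ) ≤ d := by exact_mod_cast hd
  have hrpos : (0:ℝ) < (n:ℝ) ^ (1 - 1/(d:ℝ)) := Real.rpow_pos_of_pos hnpos _
  by_cases hcase : (n:ℝ) ≤ N₀
  · -- small n
    calc (T.card : ℝ) ≤ n := by exact_mod_cast le_trans (Finset.card_le_card (Finset.subset_univ T)) (le_of_eq (Finset.card_univ.trans (Fintype.card_fin n)))
    _ = (n:ℝ) ^ ((1:ℝ)/d) * (n:ℝ) ^ (1 - 1/(d:ℝ)) := by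
        rw [← Real.rpow_add hnpos]
        norm_num
    _ ≤ N₀ * (n:ℝ) ^ (1 - 1/(d:ℝ)) := by
        apply mul_le_mul_of_nonneg_right _ (le_of_lt hrpos)
        calc (n:ℝ) ^ ((1:ℝ)/d) ≤ (n:ℝ) ^ (1:ℝ) := by
              apply Real.rpow_le_rpow_of_exponent_le hn1
              rw [div_le_one (by linarith)]; exact hd1
        _ = n := Real.rpow_one _
        _ ≤ N₀ := hcase
    _ ≤ max ((MC + 1) * (8 * Real.sqrt (d+3))) N₀ * (n:ℝ) ^ (1 - 1/(d:ℝ)) := by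
        apply mul_le_mul_of_nonneg_right (le_max_right _ _) (le_of_lt hrpos)
  · -- large n
    push_neg at hcase
    set δ : ℝ := 2 * Real.sqrt (d + 3) * (n : ℝ) ^ (-(1 : ℝ) / d) with hδdef
    have hnr : (0:ℝ) < (n:ℝ) ^ (-(1:ℝ)/d) := Real.rpow_pos_of_pos hnpos _
    have hδpos : 0 < δ := by positivity
    have hεlt : 2 * δ < ε₀ := by
      have h1 : (n:ℝ) ^ ((1:ℝ)/d) > c := by
        have := Real.rpow_lt_rpow (le_of_lt hN₀pos) hcase
          (by positivity : (0:ℝ) < 1/(d:ℝ))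
        rwa [hN₀, ← Real.rpow_natCast c d, ← Real.rpow_mul (le_of_lt hcpos),
          mul_one_div, div_self (by positivity : (d:ℝ) ≠ 0), Real.rpow_one] at this
      have h2 : (n:ℝ) ^ (-(1:ℝ)/d) < 1 / c := by
        rw [neg_div, Real.rpow_neg (le_of_lt hnpos)]
        calc ((n:ℝ) ^ ((1:ℝ)/d))⁻¹ < c⁻¹ := inv_strictAnti₀ hcpos h1
        _ = 1 / c := (one_div c).symm
      have h3 : 2 * δ = 4 * Real.sqrt (d+3) * (n:ℝ) ^ (-(1:ℝ)/d) := by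
        rw [hδdef]; ring
      have h4 : 4 * Real.sqrt (d+3) * (1/c) = ε₀ := by
        rw [hc]; field_simp
      calc 2 * δ = 4 * Real.sqrt (d+3) * (n:ℝ) ^ (-(1:ℝ)/d) := h3
      _ < 4 * Real.sqrt (d+3) * (1/c) := by
          apply mul_lt_mul_of_pos_left h2 (by positivity)
      _ = ε₀ := h4
    have hsub : ∀ i ∈ T, E i ⊆ Metric.cthickening (2*δ) (frontier S) := fun i hi =>
      aux_subset_cthickening ((aux_cube_bounded d).subset (hEsub i)) (hEdiam i)
        (hT i hi).1 (hT i hi).2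
    have hvolT : (T.card : ℝ≥0∞) * (1/n) ≤ volume (Metric.cthickening (2*δ) (frontier S)) := by
      have hdisj : (T : Set (Fin n)).PairwiseDisjoint E := fun i _ j _ hij => hEdisj hij
      have hbu := measure_biUnion_finset (μ := (volume : Measure (EuclideanSpace ℝ (Fin d)))) hdisj (fun i _ => hEmeas i)
      calc (T.card : ℝ≥0∞) * (1/n) = ∑ _i ∈ T, ((1:ℝ≥0∞)/n) := by
            rw [Finset.sum_const, nsmul_eq_mul]
      _ = ∑ i ∈ T, volume (E i) := by
            exact (Finset.sum_congr rfl (fun i _ => (hEvol i).symm))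
      _ = volume (⋃ i ∈ T, E i) := hbu.symm
      _ ≤ volume (Metric.cthickening (2*δ) (frontier S)) :=
            measure_mono (Set.iUnion₂_subset hsub)
    have hbnd : Bornology.IsBounded (Metric.cthickening (2*δ) (frontier S)) := by
      apply Bornology.IsBounded.cthickening
      exact (((aux_cube_bounded d).subset hS).closure).subset frontier_subset_closure
    have hfin : volume (Metric.cthickening (2*δ) (frontier S)) ≠ ⊤ :=
      hbnd.measure_lt_top.ne
    have hreal : (T.card : ℝ) * (1/n) ≤ (volume (Metric.cthickening (2*δ) (frontier S))).toReal := by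
      have h5 := ENNReal.toReal_mono hfin hvolT
      rw [ENNReal.toReal_mul, one_div, ENNReal.toReal_inv, ENNReal.toReal_natCast,
        ENNReal.toReal_natCast] at h5
      rwa [one_div]
    have hkey := key (2*δ) (by positivity) hεlt
    calc (T.card:ℝ) = (T.card * (1/n)) * n := by field_simp
    _ ≤ ((MC+1) * (2*(2*δ))) * n := by
        apply mul_le_mul_of_nonneg_right (hreal.trans hkey) (le_of_lt hnpos)
    _ = (MC+1) * (8*Real.sqrt (d+3)) * ((n:ℝ) * (n:ℝ) ^ (-(1:ℝ)/d)) := by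
        rw [hδdef]; ring
    _ = (MC+1) * (8*Real.sqrt (d+3)) * (n:ℝ) ^ (1 - 1/(d:ℝ)) := by
        congr 1
        have h6 : (n:ℝ) * (n:ℝ) ^ (-(1:ℝ)/d) = (n:ℝ) ^ ((1:ℝ) + (-(1:ℝ)/d)) := by
          rw [Real.rpow_add hnpos, Real.rpow_one]
        rw [h6]
        norm_num [sub_eq_add_neg, neg_div]
    _ ≤ max ((MC + 1) * (8 * Real.sqrt (d+3))) N₀ * (n:ℝ) ^ (1 - 1/(d:ℝ)) := by
        apply mul_le_mul_of_nonneg_right (le_max_left _ _) (le_of_lt hrpos)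

lemma aux_sample (d : ℕ) {Ω' : Type*} [MeasureSpace Ω'] [IsProbabilityMeasure (ℙ : Measure Ω')]
    {X : Ω' → EuclideanSpace ℝ (Fin d)} {A : Set (EuclideanSpace ℝ (Fin d))}
    (hA : MeasurableSet A) {n : ℕ} (hn : 0 < n) (hvol : volume A = 1 / n)
    (hmap : Measure.map X ℙ = (n : ℝ≥0∞) • volume.restrict A)
    {f : EuclideanSpace ℝ (Fin d) → ℝ} (hf : Measurable f) (D : ℝ) (hfD : ∀ z, |f z| ≤ D) :
    AEStronglyMeasurable (fun ω => f (X ω)) ℙ ∧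
    MemLp (fun ω => f (X ω)) 2 ℙ ∧
    (∫ ω, f (X ω) ∂ℙ = n * ∫ z in A, f z) ∧
    (∀ c B : ℝ, (∀ z ∈ A, |f z - c| ≤ B) →
      variance (fun ω => f (X ω)) ℙ ≤ B ^ 2) := by
  have hnne : n ≠ 0 := Nat.pos_iff_ne_zero.1 hn
  have hn0 : (n : ℝ≥0∞) ≠ 0 := by exact_mod_cast hnne
  have hnt : (n : ℝ≥0∞) ≠ ⊤ := ENNReal.natCast_ne_top n
  set ν : Measure (EuclideanSpace ℝ (Fin d)) := (n : ℝ≥0∞) • volume.restrict A with hν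
  have hprob : IsProbabilityMeasure ν := by
    constructor
    rw [hν, Measure.smul_apply, smul_eq_mul, Measure.restrict_apply MeasurableSet.univ,
      Set.univ_inter, hvol, one_div, ENNReal.mul_inv_cancel hn0 hnt]
  have hXae : AEMeasurable X (ℙ : Measure Ω') := by
    by_contra h
    rw [Measure.map_of_not_aemeasurable h] at hmap
    have h1 : ν Set.univ = 1 := measure_univ
    rw [← hmap] at h1
    simp at h1
  have haesm : AEStronglyMeasurable (fun ω => f (X ω)) (ℙ : Measure Ω') :=
    (hf.comp_aemeasurable hXae).aestronglyMeasurable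
  have hD0 : 0 ≤ D := le_trans (abs_nonneg _) (hfD 0)
  have hmem : MemLp (fun ω => f (X ω)) 2 (ℙ : Measure Ω') := by
    apply MemLp.of_bound haesm D
    filter_upwards with ω
    rw [Real.norm_eq_abs]
    exact hfD _
  have hint : ∫ ω, f (X ω) ∂ℙ = n * ∫ z in A, f z := by
    rw [aux_integral_comp hmap hf, hν, integral_smul_measure]
    simp [ENNReal.toReal_natCast]
  refine ⟨haesm, hmem, hint, ?_⟩
  intro c B hcB
  have hmemA : ∀ᵐ ω ∂(ℙ : Measure Ω'), X ω ∈ A := by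
    apply aux_ae_mem hmap hA
    rw [hν, Measure.smul_apply, smul_eq_mul, Measure.restrict_apply hA.compl,
      Set.compl_inter_self, measure_empty, mul_zero]
  apply aux_variance_le haesm c B
  filter_upwards [hmemA] with ω hω
  exact hcB _ hω

set_option maxHeartbeats 1000000 in
open scoped Classical in
/-- The adaptive stratified estimator, which oversamples the boundary strata of a
discontinuous integrand `f = g·1_Ω`, is unbiased and has variance `O(n^{-1-2/d})`. -/
theorem adaptive_stratified_estimator (d : ℕ) (hd : 1 ≤ d)
    (S : Set (EuclideanSpace ℝ (Fin d)))
    (hS : S ⊆ {y : EuclideanSpace ℝ (Fin d) | ∀ j, y j ∈ Set.Icc (0 : ℝ) 1})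
    (hSmeas : MeasurableSet S)
    (MC : ℝ)
    (hMC : Tendsto (fun ε : ℝ =>
        (volume (Metric.cthickening ε (frontier S))).toReal / (2 * ε))
      (nhdsWithin 0 (Set.Ioi 0)) (nhds MC))
    (g : EuclideanSpace ℝ (Fin d) → ℝ) (hgm : Measurable g) (M D : ℝ)
    (hLip : ∀ u v, |g u - g v| ≤ M * ‖u - v‖)
    (hbdd : ∀ u ∈ {y : EuclideanSpace ℝ (Fin d) | ∀ j, y j ∈ Set.Icc (0 : ℝ) 1}, |g u| ≤ D) :
    ∃ C : ℝ, ∀ n : ℕ, 0 < n →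
      ∀ (Ω' : Type) (_ : MeasureSpace Ω'), IsProbabilityMeasure (ℙ : Measure Ω') →
      ∀ E : Fin n → Set (EuclideanSpace ℝ (Fin d)),
        (∀ i, MeasurableSet (E i)) →
        (∀ i, E i ⊆ {y : EuclideanSpace ℝ (Fin d) | ∀ j, y j ∈ Set.Icc (0 : ℝ) 1}) →
        Pairwise (Function.onFun Disjoint E) →
        (∀ i, volume (E i) = 1 / n) →
        volume ({y : EuclideanSpace ℝ (Fin d) | ∀ j, y j ∈ Set.Icc (0 : ℝ) 1}
          \ ⋃ i, E i) = 0 →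
        (∀ i, Metric.diam (E i) ≤ 2 * Real.sqrt (d + 3) * (n : ℝ) ^ (-(1 : ℝ) / d)) →
        -- boundary strata and the number of repeated samples per boundary stratum
        ∀ (T : Finset (Fin n)),
          T = Finset.univ.filter (fun i => (E i ∩ S).Nonempty ∧ ¬ E i ⊆ S) →
        ∀ n₀ : ℕ, n₀ = ⌈(n : ℝ) / (T.card : ℝ)⌉₊ →
        -- the random samples: `x i` for ordinary strata, `y j i` for repeated
        -- sampling of boundary strata; all mutually independent
        ∀ (x : Fin n → Ω' → EuclideanSpace ℝ (Fin d))
          (y : ℕ → Fin n → Ω' → EuclideanSpace ℝ (Fin d)),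
          iIndepFun
            (Sum.elim x (fun p : ℕ × Fin n => y p.1 p.2)) ℙ →
          (∀ i, Measure.map (x i) ℙ = (n : ℝ≥0∞) • volume.restrict (E i)) →
          (∀ j i, Measure.map (y j i) ℙ = (n : ℝ≥0∞) • volume.restrict (E i)) →
          (∫ ω, ((1 / ((n : ℝ) * n₀)) * ∑ j ∈ Finset.range n₀, ∑ i ∈ T,
                Set.indicator S g (y j i ω)
              + (1 / (n : ℝ)) * ∑ i ∈ Tᶜ, Set.indicator S g (x i ω)) ∂ℙ
            = ∫ z in {y : EuclideanSpace ℝ (Fin d) | ∀ j, y j ∈ Set.Icc (0 : ℝ) 1},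
                Set.indicator S g z) ∧
          variance (fun ω => (1 / ((n : ℝ) * n₀)) * ∑ j ∈ Finset.range n₀, ∑ i ∈ T,
                Set.indicator S g (y j i ω)
              + (1 / (n : ℝ)) * ∑ i ∈ Tᶜ, Set.indicator S g (x i ω)) ℙ
            ≤ C * (n : ℝ) ^ (-(1 : ℝ) - 2 / d) := by
  obtain ⟨A, hA0, hA⟩ := aux_card_bound d hd S hS MC hMC
  have hD0 : 0 ≤ D := le_trans (abs_nonneg _)
    (hbdd 0 (by intro j; simp [Set.mem_Icc]))
  have hM0 : 0 ≤ M := by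
    have h0 : Fin d := ⟨0, hd⟩
    set v : EuclideanSpace ℝ (Fin d) := EuclideanSpace.single h0 1 with hv
    have hvne : v ≠ 0 := by
      intro h
      have := congrArg (fun w : EuclideanSpace ℝ (Fin d) => w h0) h
      rw [hv] at this
      simp [EuclideanSpace.single_apply] at this
    have hnorm : 0 < ‖(0 : EuclideanSpace ℝ (Fin d)) - v‖ := by
      rw [zero_sub, norm_neg]
      exact norm_pos_iff.2 hvne
    nlinarith [hLip 0 v, abs_nonneg (g 0 - g v)]
  refine ⟨4 * M ^ 2 * ((d:ℝ) + 3) + D ^ 2 * A ^ 2, ?_⟩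
  intro n hn Ω' mΩ hprob E hEmeas hEsub hEdisj hEvol hEcov hEdiam T hT n₀ hn₀ x y hindep hx hy
  haveI := hprob
  have hn' : (0:ℝ) < n := by exact_mod_cast hn
  have hnne : (n:ℝ) ≠ 0 := ne_of_gt hn'
  set κ : Set (EuclideanSpace ℝ (Fin d)) :=
    {y : EuclideanSpace ℝ (Fin d) | ∀ j, y j ∈ Set.Icc (0 : ℝ) 1} with hκ
  set f : EuclideanSpace ℝ (Fin d) → ℝ := S.indicator g with hfdef
  have hfm : Measurable f := hgm.indicator hSmeas
  have hfD : ∀ z, |f z| ≤ D := by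
    intro z
    by_cases hz : z ∈ S
    · rw [hfdef, Set.indicator_of_mem hz]; exact hbdd z (hS hz)
    · rw [hfdef, Set.indicator_of_notMem hz]; simpa using hD0
  set δ : ℝ := 2 * Real.sqrt ((d:ℝ) + 3) * (n : ℝ) ^ (-(1 : ℝ) / d) with hδdef
  have hδ0 : 0 ≤ δ := by positivity
  have Px := fun i => aux_sample d (hEmeas i) hn (hEvol i) (hx i) hfm D hfD
  have Py := fun (j : ℕ) i => aux_sample d (hEmeas i) hn (hEvol i) (hy j i) hfm D hfD
  have hintx : ∀ i, Integrable (fun ω => f (x i ω)) ℙ :=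
    fun i => ((Px i).2.1).integrable one_le_two
  have hinty : ∀ (j : ℕ) i, Integrable (fun ω => f (y j i ω)) ℙ :=
    fun j i => ((Py j i).2.1).integrable one_le_two
  have hvary : ∀ (j : ℕ) i, variance (fun ω => f (y j i ω)) ℙ ≤ D ^ 2 :=
    fun j i => (Py j i).2.2.2 0 D (fun z _ => by simpa using hfD z)
  have hvarx : ∀ i ∉ T, variance (fun ω => f (x i ω)) ℙ ≤ (M * δ) ^ 2 := by
    intro i hi
    rw [hT, Finset.mem_filter] at hi
    push_neg at hi
    have hi' := hi (Finset.mem_univ i)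
    have hbE : Bornology.IsBounded (E i) := (aux_cube_bounded d).subset (hEsub i)
    by_cases hne : (E i ∩ S).Nonempty
    · obtain ⟨z₀, hz₀E, hz₀S⟩ := hne
      have hsub : E i ⊆ S := hi' ⟨z₀, hz₀E, hz₀S⟩
      apply (Px i).2.2.2 (g z₀) (M * δ)
      intro z hz
      rw [hfdef, Set.indicator_of_mem (hsub hz)]
      calc |g z - g z₀| ≤ M * ‖z - z₀‖ := hLip z z₀
      _ ≤ M * δ := by
          apply mul_le_mul_of_nonneg_left _ hM0
          rw [← dist_eq_norm]
          exact le_trans (Metric.dist_le_diam_of_mem hbE hz hz₀E) (hEdiam i)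
    · apply (Px i).2.2.2 0 (M * δ)
      intro z hz
      have hzS : z ∉ S := fun hzS => hne ⟨z, hz, hzS⟩
      rw [hfdef, Set.indicator_of_notMem hzS]
      simpa using mul_nonneg hM0 hδ0
  constructor
  · -- unbiasedness
    have hAint : Integrable (fun ω => (1 / ((n:ℝ) * n₀)) *
        ∑ j ∈ Finset.range n₀, ∑ i ∈ T, f (y j i ω)) ℙ := by
      apply Integrable.const_mul
      exact integrable_finset_sum _
        (fun j _ => integrable_finset_sum _ (fun i _ => hinty j i))
    have hBint : Integrable (fun ω => (1 / (n:ℝ)) * ∑ i ∈ Tᶜ, f (x i ω)) ℙ :=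
      (integrable_finset_sum _ (fun i _ => hintx i)).const_mul _
    have hEy : ∀ j : ℕ, ∫ ω, (∑ i ∈ T, f (y j i ω)) ∂ℙ
        = ∑ i ∈ T, (n:ℝ) * ∫ z in E i, f z := by
      intro j
      rw [integral_finset_sum _ (fun i _ => hinty j i)]
      exact Finset.sum_congr rfl (fun i _ => (Py j i).2.2.1)
    have hEx : ∫ ω, (∑ i ∈ Tᶜ, f (x i ω)) ∂ℙ = ∑ i ∈ Tᶜ, (n:ℝ) * ∫ z in E i, f z := by
      rw [integral_finset_sum _ (fun i _ => hintx i)]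
      exact Finset.sum_congr rfl (fun i _ => (Px i).2.2.1)
    -- the integral over the cube splits over strata
    haveI : IsFiniteMeasure (volume.restrict κ) := by
      constructor
      rw [Measure.restrict_apply_univ]
      exact (aux_cube_bounded d).measure_lt_top
    have hIκ : IntegrableOn f κ volume := by
      refine ⟨hfm.aestronglyMeasurable.restrict, ?_⟩
      apply HasFiniteIntegral.of_bounded (C := D)
      filter_upwards with z
      rw [Real.norm_eq_abs]
      exact hfD z
    have hunion : ∫ z in κ, f z = ∑ i, ∫ z in E i, f z := by
      have h1 : (⋃ i, E i) =ᵐ[volume] κ := by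
        rw [MeasureTheory.ae_eq_set]
        constructor
        · have he : (⋃ i, E i) \ κ = ∅ := Set.diff_eq_empty.2 (Set.iUnion_subset hEsub)
          rw [he]; exact measure_empty
        · exact hEcov
      rw [← setIntegral_congr_set h1,
        integral_iUnion_fintype hEmeas hEdisj (fun i => hIκ.mono_set (hEsub i))]
    rw [integral_add hAint hBint, integral_const_mul, integral_const_mul,
      integral_finset_sum _ (fun j _ =>
        integrable_finset_sum _ (fun i _ => hinty j i)),
      Finset.sum_congr rfl (fun j _ => hEy j), hEx, hunion]
    rw [Finset.sum_const, Finset.card_range, nsmul_eq_mul, ← Finset.mul_sum, ← Finset.mul_sum,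
      ← Finset.sum_add_sum_compl T (fun i => ∫ z in E i, f z)]
    by_cases hTe : T = ∅
    · rw [hTe]
      simp only [Finset.sum_empty, mul_zero, zero_add]
      field_simp
    · have hTc : 0 < T.card := Finset.card_pos.2 (Finset.nonempty_iff_ne_empty.2 hTe)
      have hTc' : (0:ℝ) < T.card := by exact_mod_cast hTc
      have hn₀pos : 0 < n₀ := by
        rw [hn₀]
        exact Nat.ceil_pos.2 (div_pos hn' hTc')
      have hn₀ne : (n₀:ℝ) ≠ 0 := by
        have : (0:ℝ) < n₀ := by exact_mod_cast hn₀pos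
        exact ne_of_gt this
      field_simp
  · -- variance bound
    set W : (Fin n ⊕ ℕ × Fin n) → Ω' → ℝ :=
      Sum.elim (fun i ω => (1 / (n:ℝ)) * f (x i ω))
        (fun p ω => (1 / ((n:ℝ) * n₀)) * f (y p.1 p.2 ω)) with hW
    have hdisjs : Disjoint (Tᶜ.map ⟨Sum.inl, Sum.inl_injective⟩)
        ((Finset.range n₀ ×ˢ T).map
          ⟨(Sum.inr : ℕ × Fin n → Fin n ⊕ ℕ × Fin n), Sum.inr_injective⟩) := by
      simp [Finset.disjoint_left]
    set s : Finset (Fin n ⊕ ℕ × Fin n) :=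
      Finset.disjUnion (Tᶜ.map ⟨Sum.inl, Sum.inl_injective⟩)
        ((Finset.range n₀ ×ˢ T).map
          ⟨(Sum.inr : ℕ × Fin n → Fin n ⊕ ℕ × Fin n), Sum.inr_injective⟩) hdisjs with hs
    have hmemW : ∀ k, MemLp (W k) 2 (ℙ : Measure Ω') := by
      rintro (i | ⟨j, i⟩)
      · exact ((Px i).2.1).const_mul _
      · exact ((Py j i).2.1).const_mul _
    have hφ1 : Measurable (fun v : EuclideanSpace ℝ (Fin d) => (1 / (n:ℝ)) * f v) :=
      hfm.const_mul _
    have hφ2 : Measurable (fun v : EuclideanSpace ℝ (Fin d) => (1 / ((n:ℝ) * n₀)) * f v) :=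
      hfm.const_mul _
    have hpair : Set.Pairwise ↑s (fun k k' => IndepFun (W k) (W k') ℙ) := by
      intro k _ k' _ hkk'
      rcases k with i | p <;> rcases k' with i' | p'
      · exact (hindep.indepFun hkk').comp hφ1 hφ1
      · exact (hindep.indepFun hkk').comp hφ1 hφ2
      · exact (hindep.indepFun hkk').comp hφ2 hφ1
      · exact (hindep.indepFun hkk').comp hφ2 hφ2
    have hfun : (fun ω => (1 / ((n : ℝ) * n₀)) * ∑ j ∈ Finset.range n₀, ∑ i ∈ T,
          f (y j i ω) + (1 / (n : ℝ)) * ∑ i ∈ Tᶜ, f (x i ω)) = ∑ k ∈ s, W k := by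
      funext ω
      rw [Finset.sum_apply, hs, Finset.sum_disjUnion, Finset.sum_map, Finset.sum_map]
      simp only [Function.Embedding.coeFn_mk, hW, Sum.elim_inl, Sum.elim_inr]
      rw [Finset.sum_product]
      simp only [Finset.mul_sum]
      exact add_comm _ _
    rw [hfun, IndepFun.variance_sum (fun k _ => hmemW k) hpair, hs,
      Finset.sum_disjUnion, Finset.sum_map, Finset.sum_map]
    simp only [Function.Embedding.coeFn_mk]
    have hWL : ∀ i, variance (W (Sum.inl i)) ℙ
        = (1 / (n:ℝ)) ^ 2 * variance (fun ω => f (x i ω)) ℙ := by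
      intro i
      have h : W (Sum.inl i) = (1 / (n:ℝ)) • (fun ω => f (x i ω)) := rfl
      rw [h, variance_smul]
    have hWR : ∀ p : ℕ × Fin n, variance (W (Sum.inr p)) ℙ
        = (1 / ((n:ℝ) * n₀)) ^ 2 * variance (fun ω => f (y p.1 p.2 ω)) ℙ := by
      intro p
      have h : W (Sum.inr p) = (1 / ((n:ℝ) * n₀)) • (fun ω => f (y p.1 p.2 ω)) := rfl
      rw [h, variance_smul]
    rw [Finset.sum_congr rfl (fun i _ => hWL i), Finset.sum_congr rfl (fun p _ => hWR p)]
    -- bound the two sums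
    have h1 : ∑ i ∈ Tᶜ, (1 / (n:ℝ)) ^ 2 * variance (fun ω => f (x i ω)) ℙ
        ≤ (n:ℝ) * ((1 / (n:ℝ)) ^ 2 * (M * δ) ^ 2) := by
      calc ∑ i ∈ Tᶜ, (1 / (n:ℝ)) ^ 2 * variance (fun ω => f (x i ω)) ℙ
          ≤ ∑ _i ∈ Tᶜ, (1 / (n:ℝ)) ^ 2 * (M * δ) ^ 2 :=
            Finset.sum_le_sum (fun i hi => mul_le_mul_of_nonneg_left
              (hvarx i (Finset.mem_compl.1 hi)) (by positivity))
      _ = (Tᶜ.card : ℝ) * ((1 / (n:ℝ)) ^ 2 * (M * δ) ^ 2) := by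
            rw [Finset.sum_const, nsmul_eq_mul]
      _ ≤ (n:ℝ) * ((1 / (n:ℝ)) ^ 2 * (M * δ) ^ 2) := by
            apply mul_le_mul_of_nonneg_right _ (by positivity)
            have := Finset.card_le_card (Finset.subset_univ Tᶜ)
            have h2 : (Tᶜ.card : ℕ) ≤ n := by simpa using this
            exact_mod_cast h2
    have h2 : ∑ p ∈ Finset.range n₀ ×ˢ T, (1 / ((n:ℝ) * n₀)) ^ 2 *
          variance (fun ω => f (y p.1 p.2 ω)) ℙ
        ≤ ((n₀ : ℝ) * T.card) * ((1 / ((n:ℝ) * n₀)) ^ 2 * D ^ 2) := by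
      calc ∑ p ∈ Finset.range n₀ ×ˢ T, (1 / ((n:ℝ) * n₀)) ^ 2 *
            variance (fun ω => f (y p.1 p.2 ω)) ℙ
          ≤ ∑ _p ∈ Finset.range n₀ ×ˢ T, (1 / ((n:ℝ) * n₀)) ^ 2 * D ^ 2 :=
            Finset.sum_le_sum (fun p _ => mul_le_mul_of_nonneg_left
              (hvary p.1 p.2) (by positivity))
      _ = ((n₀ : ℝ) * T.card) * ((1 / ((n:ℝ) * n₀)) ^ 2 * D ^ 2) := by
            rw [Finset.sum_const, nsmul_eq_mul, Finset.card_product, Finset.card_range]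
            push_cast
            ring
    -- rpow arithmetic
    have hr2 : ((n:ℝ) ^ (-(1:ℝ)/d)) ^ 2 = (n:ℝ) ^ (-(2:ℝ)/(d:ℝ)) := by
      rw [← Real.rpow_natCast ((n:ℝ) ^ (-(1:ℝ)/d)) 2, ← Real.rpow_mul (le_of_lt hn')]
      congr 1
      push_cast
      ring
    have hs3 : Real.sqrt ((d:ℝ) + 3) ^ 2 = (d:ℝ) + 3 :=
      Real.sq_sqrt (by positivity)
    have key1 : (n:ℝ) * ((1 / (n:ℝ)) ^ 2 * (M * δ) ^ 2)
        = 4 * M ^ 2 * ((d:ℝ) + 3) * (n:ℝ) ^ (-(1:ℝ) - 2/d) := by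
      have hδ2 : (M * δ) ^ 2 = 4 * M ^ 2 * ((d:ℝ) + 3) * (n:ℝ) ^ (-(2:ℝ)/(d:ℝ)) := by
        rw [hδdef, mul_pow, mul_pow, mul_pow, hr2, hs3]
        ring
      have hkey : (n:ℝ) ^ (-(2:ℝ)/(d:ℝ)) / (n:ℝ) = (n:ℝ) ^ (-(1:ℝ) - 2/d) := by
        have he : -(1:ℝ) - 2/d = (-(2:ℝ)/(d:ℝ)) - 1 := by ring
        rw [he, Real.rpow_sub hn', Real.rpow_one]
      rw [hδ2, ← hkey]
      field_simp
    have hbdd2 : ((n₀ : ℝ) * T.card) * ((1 / ((n:ℝ) * n₀)) ^ 2 * D ^ 2)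
        ≤ D ^ 2 * A ^ 2 * (n:ℝ) ^ (-(1:ℝ) - 2/d) := by
      by_cases hTe : T = ∅
      · rw [hTe]
        simp only [Finset.card_empty, Nat.cast_zero, mul_zero, zero_mul]
        positivity
      · have hTc : 0 < T.card := Finset.card_pos.2 (Finset.nonempty_iff_ne_empty.2 hTe)
        have hTc' : (0:ℝ) < T.card := by exact_mod_cast hTc
        have hn₀pos : 0 < n₀ := by
          rw [hn₀]
          exact Nat.ceil_pos.2 (div_pos hn' hTc')
        have hn₀' : (0:ℝ) < n₀ := by exact_mod_cast hn₀pos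
        have hn₀r : (n:ℝ) / (T.card : ℝ) ≤ n₀ := by
          rw [hn₀]
          exact Nat.le_ceil _
        have hkey3 : (n:ℝ) ≤ (T.card : ℝ) * n₀ := by
          rw [div_le_iff₀ hTc'] at hn₀r
          linarith [hn₀r]
        have hTcard : (T.card : ℝ) ≤ A * (n:ℝ) ^ (1 - 1/(d:ℝ)) := by
          apply hA n hn E hEmeas hEsub hEdisj hEvol hEdiam T
          intro i hi
          rw [hT, Finset.mem_filter] at hi
          exact hi.2
        have step1 : ((n₀ : ℝ) * T.card) * ((1 / ((n:ℝ) * n₀)) ^ 2 * D ^ 2)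
            ≤ D ^ 2 * (T.card : ℝ) ^ 2 / (n:ℝ) ^ 3 := by
          have expand : ((n₀ : ℝ) * T.card) * ((1 / ((n:ℝ) * n₀)) ^ 2 * D ^ 2)
              = D ^ 2 * T.card / ((n:ℝ) ^ 2 * n₀) := by
            field_simp
          rw [expand, div_le_div_iff₀ (by positivity) (by positivity)]
          nlinarith [mul_le_mul_of_nonneg_left hkey3
            (by positivity : (0:ℝ) ≤ D ^ 2 * (T.card : ℝ) * (n:ℝ) ^ 2)]
        have hr3 : ((n:ℝ) ^ ((1:ℝ) - 1/(d:ℝ))) ^ 2 = (n:ℝ) ^ (2 - 2/(d:ℝ)) := by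
          rw [← Real.rpow_natCast ((n:ℝ) ^ ((1:ℝ) - 1/(d:ℝ))) 2,
            ← Real.rpow_mul (le_of_lt hn')]
          congr 1
          push_cast
          ring
        have key2 : (n:ℝ) ^ (2 - 2/(d:ℝ)) / (n:ℝ) ^ (3:ℕ) = (n:ℝ) ^ (-(1:ℝ) - 2/d) := by
          rw [← Real.rpow_natCast (n:ℝ) 3, ← Real.rpow_sub hn']
          congr 1
          push_cast
          ring
        have step2 : D ^ 2 * (T.card : ℝ) ^ 2 / (n:ℝ) ^ 3
            ≤ D ^ 2 * A ^ 2 * (n:ℝ) ^ (-(1:ℝ) - 2/d) := by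
          have hTc2 : (T.card : ℝ) ^ 2 ≤ (A * (n:ℝ) ^ ((1:ℝ) - 1/(d:ℝ))) ^ 2 := by
            apply pow_le_pow_left₀ (by positivity) _ 2
            convert hTcard using 3
          calc D ^ 2 * (T.card : ℝ) ^ 2 / (n:ℝ) ^ 3
              ≤ D ^ 2 * (A * (n:ℝ) ^ ((1:ℝ) - 1/(d:ℝ))) ^ 2 / (n:ℝ) ^ 3 := by
                gcongr
          _ = D ^ 2 * A ^ 2 * ((n:ℝ) ^ (2 - 2/(d:ℝ)) / (n:ℝ) ^ (3:ℕ)) := by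
                rw [mul_pow, hr3]
                ring
          _ = D ^ 2 * A ^ 2 * (n:ℝ) ^ (-(1:ℝ) - 2/d) := by rw [key2]
        exact le_trans step1 step2
    calc ∑ i ∈ Tᶜ, (1 / (n:ℝ)) ^ 2 * variance (fun ω => f (x i ω)) ℙ
          + ∑ p ∈ Finset.range n₀ ×ˢ T, (1 / ((n:ℝ) * n₀)) ^ 2 *
            variance (fun ω => f (y p.1 p.2 ω)) ℙ
        ≤ (n:ℝ) * ((1 / (n:ℝ)) ^ 2 * (M * δ) ^ 2)
          + ((n₀ : ℝ) * T.card) * ((1 / ((n:ℝ) * n₀)) ^ 2 * D ^ 2) := add_le_add h1 h2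
    _ ≤ 4 * M ^ 2 * ((d:ℝ) + 3) * (n:ℝ) ^ (-(1:ℝ) - 2/d)
          + D ^ 2 * A ^ 2 * (n:ℝ) ^ (-(1:ℝ) - 2/d) := by
        rw [key1]
        exact add_le_add_right hbdd2 _
    _ = (4 * M ^ 2 * ((d:ℝ) + 3) + D ^ 2 * A ^ 2) * (n:ℝ) ^ (-(1:ℝ) - 2/d) := by ring
end
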